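/- arXiv:1709.04138 — 3 statements merged into one kernel-verified Lean document; each statement's English description precedes it below -/
import Mathlib

section
/- Let 0 < q < 1, k ≥ 0, 0 ≤ α < 1, λ ≥ -1, and Φ_2 = ([2]_q(1+k) - k - α)·Ψ_q(2,λ) with Ψ_q(2,λ) = Γ_q(2+λ)/Γ_q(1+λ). Let f(z) = z + ∑_{n≥2} a_n z^n satisfy ∑_{n≥2} Φ_n |a_n| ≤ 1 - α where Φ_n = ([n]_q(1+k) - k - α)Ψ_q(n,λ) is increasing in n. Then for all z in the unit disc, Re(1 + (Φ_2/(1-α+Φ_2)) ∑_{n≥1} a_n z^n) > 0, where a_1 = 1. -/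
open Metric

/-- The q-factorial `[n]_q!`. -/
noncomputable def qFact (q : ℝ) (n : ℕ) : ℝ :=
  ∏ i ∈ Finset.range n, (1 - q ^ (i + 1)) / (1 - q)

/-- The coefficient `Ψ_q(n, λ) = Γ_q(n+λ) / ([n-1]_q! Γ_q(1+λ))`. -/
noncomputable def Psi (q lam : ℝ) (Γq : ℝ → ℝ) (n : ℕ) : ℝ :=
  Γq ((n : ℝ) + lam) / (qFact q (n - 1) * Γq (1 + lam))

/-- The weight `Φ_n = ([n]_q(1+k) - k - α) Ψ_q(n, λ)`. -/
noncomputable def Phi (q k α lam : ℝ) (Γq : ℝ → ℝ) (n : ℕ) : ℝ :=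
  (((1 - q ^ n) / (1 - q)) * (1 + k) - k - α) * Psi q lam Γq n

/-- The positivity of the real part appearing in the subordination theorem. -/
theorem re_positivity_subordination (q k α lam : ℝ)
    (hq0 : 0 < q) (hq1 : q < 1) (hk : 0 ≤ k) (hα0 : 0 ≤ α) (hα1 : α < 1)
    (hlam : -1 ≤ lam)
    (Γq : ℝ → ℝ) (hΓ1 : Γq 1 = 1)
    (hΓ : ∀ t : ℝ, 0 < t → Γq (t + 1) = (1 - q ^ t) / (1 - q) * Γq t)
    (hΦ2 : 0 < Phi q k α lam Γq 2)
    (hΦmono : ∀ n : ℕ, 2 ≤ n → Phi q k α lam Γq 2 ≤ Phi q k α lam Γq n)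
    (a : ℕ → ℂ) (ha1 : a 1 = 1)
    (hsum : Summable (fun n : ℕ => Phi q k α lam Γq (n + 2) * ‖a (n + 2)‖))
    (hbound : (∑' n : ℕ, Phi q k α lam Γq (n + 2) * ‖a (n + 2)‖) ≤ 1 - α) :
    ∀ z ∈ ball (0 : ℂ) 1,
      0 < (1 + ((Phi q k α lam Γq 2 / (1 - α + Phi q k α lam Γq 2) : ℝ) : ℂ)
            * ∑' n : ℕ, a (n + 1) * z ^ (n + 1)).re := by
  intro z hz
  simp only [mem_ball, dist_zero_right] at hz
  set Φ2 := Phi q k α lam Γq 2 with hΦ2def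
  have h1α : 0 < 1 - α := by linarith
  have hden : 0 < 1 - α + Φ2 := by linarith
  set c := Φ2 / (1 - α + Φ2) with hcdef
  have hc0 : 0 < c := div_pos hΦ2 hden
  -- summability of ‖a (n+2)‖
  have hnn : ∀ n : ℕ, (0:ℝ) ≤ ‖a (n + 2)‖ := fun n => norm_nonneg _
  have hA : Summable (fun n : ℕ => ‖a (n + 2)‖) := by
    apply Summable.of_nonneg_of_le hnn (fun n => ?_) (hsum.mul_left Φ2⁻¹)
    have h1 : Φ2 * ‖a (n + 2)‖ ≤ Phi q k α lam Γq (n + 2) * ‖a (n + 2)‖ :=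
      mul_le_mul_of_nonneg_right (hΦmono (n + 2) (by omega)) (hnn n)
    calc ‖a (n + 2)‖ = Φ2⁻¹ * (Φ2 * ‖a (n + 2)‖) := by
          field_simp
      _ ≤ Φ2⁻¹ * (Phi q k α lam Γq (n + 2) * ‖a (n + 2)‖) :=
          mul_le_mul_of_nonneg_left h1 (inv_nonneg.mpr hΦ2.le)
  set A := ∑' n : ℕ, ‖a (n + 2)‖ with hAdef
  have hA0 : 0 ≤ A := tsum_nonneg hnn
  have hAle : Φ2 * A ≤ 1 - α := by
    have : Φ2 * A = ∑' n : ℕ, Φ2 * ‖a (n + 2)‖ := (tsum_mul_left).symm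
    rw [this]
    refine le_trans (Summable.tsum_le_tsum (fun n => ?_) (hA.mul_left Φ2) hsum) hbound
    exact mul_le_mul_of_nonneg_right (hΦmono (n + 2) (by omega)) (hnn n)
  -- summability of the complex series
  have hzn : ∀ n : ℕ, ‖a (n + 2) * z ^ (n + 2)‖ ≤ ‖a (n + 2)‖ := by
    intro n
    rw [norm_mul, norm_pow]
    calc ‖a (n + 2)‖ * ‖z‖ ^ (n + 2) ≤ ‖a (n + 2)‖ * 1 :=
          mul_le_mul_of_nonneg_left (pow_le_one₀ (norm_nonneg z) hz.le) (hnn n)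
      _ = ‖a (n + 2)‖ := mul_one _
  have hS2n : Summable (fun n : ℕ => ‖a (n + 2) * z ^ (n + 2)‖) :=
    Summable.of_nonneg_of_le (fun n => norm_nonneg _) hzn hA
  have hS2 : Summable (fun n : ℕ => a (n + 2) * z ^ (n + 2)) := hS2n.of_norm
  have hS1 : Summable (fun n : ℕ => a (n + 1) * z ^ (n + 1)) := by
    have := (summable_nat_add_iff (f := fun n : ℕ => a (n + 1) * z ^ (n + 1)) 1).mpr
    exact (summable_nat_add_iff 1).mp hS2
  set S := ∑' n : ℕ, a (n + 1) * z ^ (n + 1) with hSdef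
  have hsplit : S = a 1 * z ^ 1 + ∑' n : ℕ, a (n + 2) * z ^ (n + 2) := by
    rw [hSdef, Summable.tsum_eq_zero_add hS1]
  have hTle : ‖∑' n : ℕ, a (n + 2) * z ^ (n + 2)‖ ≤ A := by
    refine le_trans (norm_tsum_le_tsum_norm hS2n) ?_
    exact Summable.tsum_le_tsum hzn hS2n hA
  have hSle : ‖S‖ ≤ ‖z‖ + A := by
    rw [hsplit]
    refine le_trans (norm_add_le _ _) (add_le_add ?_ hTle)
    rw [ha1, one_mul, pow_one]
  have hre : (1 + (c : ℂ) * S).re = 1 + c * S.re := by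
    simp [Complex.add_re, Complex.mul_re]
  rw [hre]
  have habs : |S.re| ≤ ‖S‖ := Complex.abs_re_le_norm S
  have hkey : c * (‖z‖ + A) < 1 := by
    rw [hcdef, div_mul_eq_mul_div, div_lt_one hden]
    have h1 : Φ2 * ‖z‖ < Φ2 := by nlinarith
    nlinarith
  nlinarith [abs_le.mp habs, norm_nonneg z, mul_le_mul_of_nonneg_left hSle hc0.le]
end

section
/- Let f(z) = z - ∑_{n≥2} b_n z^n with b_n ≥ 0 and ∑_{n≥2} Φ_n b_n ≤ 1 - α, where Φ_n > 0 is increasing in n ≥ 2 and 0 ≤ α < 1. Then 1 - ∑_{n≥2} b_n z^{n-1} is subordinate to 1 - ((1-α)/Φ_2) z on the unit disc. -/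
open Metric

/-- Subordination of `g` to `f` on the unit disc. -/
def Subordinate (g f : ℂ → ℂ) : Prop :=
  ∃ w : ℂ → ℂ, AnalyticOnNhd ℂ w (ball (0 : ℂ) 1) ∧ w 0 = 0 ∧
    (∀ z ∈ ball (0 : ℂ) 1, w z ∈ ball (0 : ℂ) 1) ∧
    ∀ z ∈ ball (0 : ℂ) 1, g z = f (w z)

/-- If `∑_{n ≥ 2} Φ_n b_n ≤ 1 - α` with `Φ_n > 0` increasing and `b_n ≥ 0`, then
`1 - ∑_{n ≥ 2} b_n z^{n-1} ≺ 1 - ((1-α)/Φ_2) z` on the unit disc. -/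
theorem subordination_of_coeff_bound (α : ℝ) (hα0 : 0 ≤ α) (hα1 : α < 1)
    (Φ : ℕ → ℝ) (hΦpos : ∀ n : ℕ, 2 ≤ n → 0 < Φ n)
    (hΦmono : ∀ m n : ℕ, 2 ≤ m → m ≤ n → Φ m ≤ Φ n)
    (b : ℕ → ℝ) (hb : ∀ n, 0 ≤ b n)
    (hsum : Summable (fun n : ℕ => Φ (n + 2) * b (n + 2)))
    (hbound : (∑' n : ℕ, Φ (n + 2) * b (n + 2)) ≤ 1 - α) :
    Subordinate (fun z => 1 - ∑' n : ℕ, (b (n + 2) : ℂ) * z ^ (n + 1))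
      (fun z => 1 - (((1 - α) / Φ 2 : ℝ) : ℂ) * z) := by
  have hΦ2 : 0 < Φ 2 := hΦpos 2 le_rfl
  have h1α : 0 < 1 - α := by linarith
  -- summability of b
  have hbsum : Summable (fun n : ℕ => b (n + 2)) := by
    apply Summable.of_nonneg_of_le (fun n => hb _)
      (fun n => ?_) (hsum.mul_left (Φ 2)⁻¹)
    rw [← mul_assoc]
    have h2 : 1 ≤ (Φ 2)⁻¹ * Φ (n + 2) := by
      rw [← div_eq_inv_mul, le_div_iff₀ hΦ2, one_mul]
      exact hΦmono 2 (n + 2) le_rfl (by omega)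
    nlinarith [hb (n + 2), hb (n+2)]
  have hB : (∑' n : ℕ, b (n + 2)) ≤ (1 - α) / Φ 2 := by
    rw [le_div_iff₀ hΦ2]
    calc (∑' n : ℕ, b (n + 2)) * Φ 2 = ∑' n : ℕ, b (n + 2) * Φ 2 := by
          rw [tsum_mul_right]
      _ ≤ ∑' n : ℕ, Φ (n + 2) * b (n + 2) := by
          apply Summable.tsum_le_tsum _ (hbsum.mul_right _) hsum
          intro n
          rw [mul_comm]
          exact mul_le_mul_of_nonneg_right (hΦmono 2 (n + 2) le_rfl (by omega)) (hb _)
      _ ≤ 1 - α := hbound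
  have hBnn : 0 ≤ (∑' n : ℕ, b (n + 2)) := tsum_nonneg fun n => hb _
  -- summability of the complex series for ‖z‖ < 1, with norm bound
  have key : ∀ z : ℂ, ‖z‖ < 1 →
      Summable (fun n : ℕ => (b (n + 2) : ℂ) * z ^ (n + 1)) ∧
      ‖∑' n : ℕ, (b (n + 2) : ℂ) * z ^ (n + 1)‖ ≤ (∑' n : ℕ, b (n + 2)) * ‖z‖ := by
    intro z hz
    have hle : ∀ n : ℕ, ‖(b (n + 2) : ℂ) * z ^ (n + 1)‖ ≤ b (n + 2) * ‖z‖ := by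
      intro n
      rw [norm_mul, norm_pow, Complex.norm_real, Real.norm_of_nonneg (hb _), pow_succ]
      have h1 : ‖z‖ ^ n * ‖z‖ ≤ ‖z‖ := by
        nlinarith [pow_le_one₀ (norm_nonneg z) hz.le (n := n), norm_nonneg z]
      exact mul_le_mul_of_nonneg_left h1 (hb _)
    have hs : Summable (fun n : ℕ => (b (n + 2) : ℂ) * z ^ (n + 1)) := by
      apply Summable.of_norm
      exact Summable.of_nonneg_of_le (fun n => norm_nonneg _) hle (hbsum.mul_right _)
    refine ⟨hs, ?_⟩
    calc ‖∑' n : ℕ, (b (n + 2) : ℂ) * z ^ (n + 1)‖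
        ≤ ∑' n : ℕ, b (n + 2) * ‖z‖ := by
          apply tsum_of_norm_bounded ((hbsum.mul_right _).hasSum) hle
      _ = (∑' n : ℕ, b (n + 2)) * ‖z‖ := tsum_mul_right
  -- the coefficient sequence and power series
  set c : ℕ → ℂ := fun n => Nat.rec 0 (fun m _ => (b (m + 2) : ℂ)) n with hc
  have hc0 : c 0 = 0 := rfl
  have hcs : ∀ n, c (n + 1) = (b (n + 2) : ℂ) := fun n => rfl
  set p : FormalMultilinearSeries ℂ ℂ ℂ := FormalMultilinearSeries.ofScalars ℂ c with hp
  have hcbdd : ∃ C : ℝ, ∀ n, ‖c n‖ ≤ C := by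
    refine ⟨1 + ∑' n : ℕ, b (n + 2), fun n => ?_⟩
    cases n with
    | zero => simp [hc0]; linarith
    | succ m =>
      rw [hcs, Complex.norm_real, Real.norm_of_nonneg (hb _)]
      have := Summable.le_tsum hbsum m (fun i _ => hb _)
      linarith
  have hrad : 1 ≤ p.radius := by
    obtain ⟨C, hC⟩ := hcbdd
    apply ENNReal.le_of_forall_nnreal_lt
    intro r hr
    apply p.le_radius_of_bound C
    intro n
    rw [hp, FormalMultilinearSeries.ofScalars_norm]
    have hr1 : (r : ℝ) ^ n ≤ 1 := pow_le_one₀ r.2 (by exact_mod_cast hr.le)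
    have hCnn : 0 ≤ C := (norm_nonneg (c 0)).trans (hC 0)
    nlinarith [norm_nonneg (c n), hC n, pow_nonneg r.2 n]
  have hpan : AnalyticOnNhd ℂ p.sum (ball (0 : ℂ) 1) := by
    have h0 : (0 : ENNReal) < p.radius := lt_of_lt_of_le one_pos hrad
    have := (p.hasFPowerSeriesOnBall h0).analyticOnNhd
    intro z hz
    apply this
    simp only [EMetric.mem_ball, edist_zero_right]
    simp only [mem_ball, dist_zero_right] at hz
    have h1 : (‖z‖₊ : ENNReal) < 1 := by exact_mod_cast hz
    exact lt_of_lt_of_le h1 hrad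
  -- the sum of p agrees with our shifted tsum on the ball
  have hps : ∀ z : ℂ, ‖z‖ < 1 →
      p.sum z = ∑' n : ℕ, (b (n + 2) : ℂ) * z ^ (n + 1) := by
    intro z hz
    have hs := (key z hz).1
    have hsum' : Summable (fun n : ℕ => c n * z ^ n) := by
      rw [← summable_nat_add_iff 1]
      simpa [hcs] using hs
    rw [FormalMultilinearSeries.sum, tsum_congr
      (fun n => FormalMultilinearSeries.ofScalars_apply_eq c z n)]
    simp_rw [smul_eq_mul]
    rw [Summable.tsum_eq_zero_add hsum']
    simp [hc0, hcs]
  -- define w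
  refine ⟨fun z => (↑(Φ 2 / (1 - α)) : ℂ) * p.sum z, ?_, ?_, ?_, ?_⟩
  · exact fun z hz => analyticAt_const.mul (hpan z hz)
  · have : p.sum 0 = 0 := by
      rw [hps 0 (by simp)]
      simp
    simp [this]
  · intro z hz
    simp only [mem_ball, dist_zero_right] at hz ⊢
    rw [hps z hz, norm_mul]
    have h1 : ‖(↑(Φ 2 / (1 - α)) : ℂ)‖ = Φ 2 / (1 - α) := by
      rw [Complex.norm_real, Real.norm_of_nonneg (by positivity)]
    rw [h1]
    calc Φ 2 / (1 - α) * ‖∑' n : ℕ, (b (n + 2) : ℂ) * z ^ (n + 1)‖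
        ≤ Φ 2 / (1 - α) * ((∑' n : ℕ, b (n + 2)) * ‖z‖) := by
          apply mul_le_mul_of_nonneg_left (key z hz).2 (by positivity)
      _ ≤ Φ 2 / (1 - α) * ((1 - α) / Φ 2 * ‖z‖) := by
          apply mul_le_mul_of_nonneg_left _ (by positivity)
          exact mul_le_mul_of_nonneg_right hB (norm_nonneg z)
      _ = ‖z‖ := by field_simp
      _ < 1 := hz
  · intro z hz
    simp only [mem_ball, dist_zero_right] at hz
    dsimp only
    rw [hps z hz]
    have : (((1 - α) / Φ 2 : ℝ) : ℂ) * ((↑(Φ 2 / (1 - α)) : ℂ) *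
        (∑' n : ℕ, (b (n + 2) : ℂ) * z ^ (n + 1)))
        = ∑' n : ℕ, (b (n + 2) : ℂ) * z ^ (n + 1) := by
      rw [← mul_assoc, ← Complex.ofReal_mul]
      rw [div_mul_div_comm, mul_comm (1 - α)]
      rw [div_self (by positivity)]
      simp
    rw [this]
end

section
/- Let Φ > 0, 0 ≤ α < 1, and let f(z) = z + ∑_{n≥2} a_n z^n be analytic on the unit disc with ∑_{n≥2} Φ_n |a_n| ≤ 1 - α where Φ_n ≥ Φ = Φ_2 for all n ≥ 2. Then Re f(z) > -(1 - α + Φ)/Φ for all z in the unit disc. -/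
open Metric

/-- The real-part lower bound `Re f(z) > -(1 - α + Φ)/Φ` from the
subordination theorem. -/
theorem re_lower_bound (Φ α : ℝ) (hΦ : 0 < Φ) (hα0 : 0 ≤ α) (hα1 : α < 1)
    (Φn : ℕ → ℝ) (hΦn : ∀ n : ℕ, 2 ≤ n → Φ ≤ Φn n)
    (a : ℕ → ℂ) (ha0 : a 0 = 0) (ha1 : a 1 = 1)
    (f : ℂ → ℂ)
    (hf : ∀ z ∈ ball (0 : ℂ) 1, HasSum (fun n : ℕ => a n * z ^ n) (f z))
    (hsum : Summable (fun n : ℕ => Φn (n + 2) * ‖a (n + 2)‖))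
    (hbound : (∑' n : ℕ, Φn (n + 2) * ‖a (n + 2)‖) ≤ 1 - α) :
    ∀ z ∈ ball (0 : ℂ) 1, -((1 - α + Φ) / Φ) < (f z).re := by
  intro z hz
  rw [mem_ball, dist_zero_right] at hz
  -- tail has sum f z - z
  have htail : HasSum (fun n : ℕ => a (n + 2) * z ^ (n + 2)) (f z - z) := by
    have h := hf z (by simpa [mem_ball, dist_zero_right] using hz)
    have h2 := (hasSum_nat_add_iff' (f := fun n : ℕ => a n * z ^ n) 2).2 h
    simpa [Finset.sum_range_succ, ha0, ha1] using h2
  have hle : ∀ n : ℕ, ‖a (n + 2)‖ ≤ Φ⁻¹ * (Φn (n + 2) * ‖a (n + 2)‖) := by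
    intro n
    have h := hΦn (n + 2) (by omega)
    rw [le_inv_mul_iff₀ hΦ]
    nlinarith [mul_nonneg (sub_nonneg.2 h) (norm_nonneg (a (n + 2)))]
  -- summability of coefficient norms
  have hsa : Summable (fun n : ℕ => ‖a (n + 2)‖) :=
    Summable.of_nonneg_of_le (fun n => norm_nonneg _) hle (hsum.mul_left Φ⁻¹)
  have hsbound : (∑' n : ℕ, ‖a (n + 2)‖) ≤ (1 - α) / Φ := by
    calc (∑' n : ℕ, ‖a (n + 2)‖)
        ≤ ∑' n : ℕ, Φ⁻¹ * (Φn (n + 2) * ‖a (n + 2)‖) :=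
          Summable.tsum_le_tsum hle hsa (hsum.mul_left Φ⁻¹)
      _ = Φ⁻¹ * ∑' n : ℕ, Φn (n + 2) * ‖a (n + 2)‖ := tsum_mul_left
      _ ≤ Φ⁻¹ * (1 - α) := by
          apply mul_le_mul_of_nonneg_left hbound (by positivity)
      _ = (1 - α) / Φ := by ring
  -- norm bound on f z - z
  have hterm : ∀ n : ℕ, ‖a (n + 2) * z ^ (n + 2)‖ ≤ ‖a (n + 2)‖ := by
    intro n
    rw [norm_mul, norm_pow]
    calc ‖a (n + 2)‖ * ‖z‖ ^ (n + 2) ≤ ‖a (n + 2)‖ * 1 := by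
          apply mul_le_mul_of_nonneg_left _ (norm_nonneg _)
          exact pow_le_one₀ (norm_nonneg _) hz.le
      _ = ‖a (n + 2)‖ := mul_one _
  have hnorm : ‖f z - z‖ ≤ ∑' n : ℕ, ‖a (n + 2)‖ := by
    have hsterm : Summable (fun n : ℕ => ‖a (n + 2) * z ^ (n + 2)‖) :=
      Summable.of_nonneg_of_le (fun n => norm_nonneg _) hterm hsa
    calc ‖f z - z‖ ≤ ∑' n : ℕ, ‖a (n + 2) * z ^ (n + 2)‖ :=
          htail.tsum_eq ▸ norm_tsum_le_tsum_norm hsterm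
      _ ≤ ∑' n : ℕ, ‖a (n + 2)‖ := Summable.tsum_le_tsum hterm hsterm hsa
  have hre : (f z).re ≥ z.re - ‖f z - z‖ := by
    have := Complex.abs_re_le_norm (f z - z)
    simp only [Complex.sub_re] at this
    have h2 : -(‖f z - z‖) ≤ (f z).re - z.re := by
      cases abs_le.1 this with
      | intro h1 h2 => linarith
    linarith
  have hzre : -1 < z.re := by
    have := Complex.abs_re_le_norm z
    cases abs_le.1 this with
    | intro h1 h2 => linarith
  have key : -((1 - α + Φ) / Φ) = -1 - (1 - α) / Φ := by field_simp; ring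
  linarith
end
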